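/- Let S⁰ be an n×n real matrix, let λ ≥ 0, G ≥ 0, and define the gradient map ∇F₁(V) = 4(VVᵀ − S⁰)V + 2λV for V ∈ ℝ^{n×r}. Then for all A, B ∈ ℝ^{n×r} with ‖A‖_F ≤ G and ‖B‖_F ≤ G, one has ‖∇F₁(A) − ∇F₁(B)‖_F ≤ (12G² + 2λ + 4‖S⁰‖_F)·‖A − B‖_F. -/
import Mathlib

open Matrix

/-- The Frobenius norm of a real matrix, `‖A‖_F = √(∑ i j, A i j ^ 2)`. -/
noncomputable def frobNorm {m n : Type*} [Fintype m] [Fintype n] (A : Matrix m n ℝ) : ℝ :=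
  Real.sqrt (∑ i, ∑ j, (A i j) ^ 2)

attribute [local instance] Matrix.frobeniusNormedAddCommGroup Matrix.frobeniusNormedSpace

lemma frobNorm_eq_norm {m n : Type*} [Fintype m] [Fintype n] (A : Matrix m n ℝ) :
    frobNorm A = ‖A‖ := by
  rw [frobNorm, Matrix.frobenius_norm_def, Real.sqrt_eq_rpow]
  congr 1
  refine Finset.sum_congr rfl fun i _ => Finset.sum_congr rfl fun j _ => ?_
  rw [Real.norm_eq_abs, Real.rpow_two, sq_abs]

/-- The paper's appendix Lemma 4: the gradient map `∇F₁(V) = 4(VVᵀ − S⁰)V + 2λV`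
of the SMCNN objective is Lipschitz on the Frobenius ball of radius `G`, with
constant `12G² + 2λ + 4‖S⁰‖_F`. -/
theorem gradient_lipschitz_on_ball {n r : ℕ}
    (S0 : Matrix (Fin n) (Fin n) ℝ) (lam G : ℝ) (hlam : 0 ≤ lam) (hG : 0 ≤ G)
    (grad : Matrix (Fin n) (Fin r) ℝ → Matrix (Fin n) (Fin r) ℝ)
    (hgrad : ∀ V : Matrix (Fin n) (Fin r) ℝ,
      grad V = (4 : ℝ) • ((V * Vᵀ - S0) * V) + (2 * lam) • V)
    (A B : Matrix (Fin n) (Fin r) ℝ)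
    (hA : frobNorm A ≤ G) (hB : frobNorm B ≤ G) :
    frobNorm (grad A - grad B) ≤
      (12 * G ^ 2 + 2 * lam + 4 * frobNorm S0) * frobNorm (A - B) := by
  simp only [frobNorm_eq_norm] at *
  rw [hgrad A, hgrad B]
  have key : (4 : ℝ) • ((A * Aᵀ - S0) * A) + (2 * lam) • A -
      ((4 : ℝ) • ((B * Bᵀ - S0) * B) + (2 * lam) • B) =
      (4 : ℝ) • ((A - B) * Aᵀ * A) + (4 : ℝ) • (B * (A - B)ᵀ * A)
        + (4 : ℝ) • (B * Bᵀ * (A - B)) + ((-4 : ℝ)) • (S0 * (A - B))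
        + (2 * lam) • (A - B) := by
    simp only [Matrix.sub_mul, Matrix.mul_sub, Matrix.transpose_sub, smul_sub]
    module
  rw [key]
  have hAB : ‖A - B‖ = ‖(A - B)ᵀ‖ := (Matrix.frobenius_norm_transpose _).symm
  have hAt : ‖Aᵀ‖ = ‖A‖ := Matrix.frobenius_norm_transpose _
  have hnn : (0 : ℝ) ≤ ‖A - B‖ := norm_nonneg _
  have h1 : ‖(A - B) * Aᵀ * A‖ ≤ G ^ 2 * ‖A - B‖ := by
    calc ‖(A - B) * Aᵀ * A‖ ≤ ‖(A - B) * Aᵀ‖ * ‖A‖ := Matrix.frobenius_norm_mul _ _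
      _ ≤ ‖A - B‖ * ‖Aᵀ‖ * ‖A‖ := by
          exact mul_le_mul_of_nonneg_right (Matrix.frobenius_norm_mul _ _) (norm_nonneg _)
      _ ≤ ‖A - B‖ * G * G := by
          rw [hAt]
          exact mul_le_mul (mul_le_mul_of_nonneg_left hA hnn) hA (norm_nonneg _)
            (mul_nonneg hnn hG)
      _ = G ^ 2 * ‖A - B‖ := by ring
  have h2 : ‖B * (A - B)ᵀ * A‖ ≤ G ^ 2 * ‖A - B‖ := by
    calc ‖B * (A - B)ᵀ * A‖ ≤ ‖B * (A - B)ᵀ‖ * ‖A‖ := Matrix.frobenius_norm_mul _ _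
      _ ≤ ‖B‖ * ‖(A - B)ᵀ‖ * ‖A‖ := by
          exact mul_le_mul_of_nonneg_right (Matrix.frobenius_norm_mul _ _) (norm_nonneg _)
      _ ≤ G * ‖A - B‖ * G := by
          rw [← hAB]
          exact mul_le_mul (mul_le_mul_of_nonneg_right hB hnn) hA (norm_nonneg _)
            (mul_nonneg hG hnn)
      _ = G ^ 2 * ‖A - B‖ := by ring
  have h3 : ‖B * Bᵀ * (A - B)‖ ≤ G ^ 2 * ‖A - B‖ := by
    calc ‖B * Bᵀ * (A - B)‖ ≤ ‖B * Bᵀ‖ * ‖A - B‖ := Matrix.frobenius_norm_mul _ _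
      _ ≤ G ^ 2 * ‖A - B‖ := by
          refine mul_le_mul_of_nonneg_right ?_ hnn
          calc ‖B * Bᵀ‖ ≤ ‖B‖ * ‖Bᵀ‖ := Matrix.frobenius_norm_mul _ _
            _ ≤ G * G := by
                rw [Matrix.frobenius_norm_transpose]
                exact mul_le_mul hB hB (norm_nonneg _) hG
            _ = G ^ 2 := (sq G).symm
  have h4 : ‖S0 * (A - B)‖ ≤ ‖S0‖ * ‖A - B‖ := Matrix.frobenius_norm_mul _ _
  have e4 : ∀ X : Matrix (Fin n) (Fin r) ℝ, ‖(4 : ℝ) • X‖ = 4 * ‖X‖ := fun X => by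
    rw [norm_smul]; norm_num
  have e4' : ∀ X : Matrix (Fin n) (Fin r) ℝ, ‖(-4 : ℝ) • X‖ = 4 * ‖X‖ := fun X => by
    rw [norm_smul]; norm_num
  have el : ‖(2 * lam) • (A - B)‖ = 2 * lam * ‖A - B‖ := by
    rw [norm_smul, Real.norm_eq_abs, abs_of_nonneg (by linarith)]
  calc ‖(4 : ℝ) • ((A - B) * Aᵀ * A) + (4 : ℝ) • (B * (A - B)ᵀ * A)
        + (4 : ℝ) • (B * Bᵀ * (A - B)) + ((-4 : ℝ)) • (S0 * (A - B))
        + (2 * lam) • (A - B)‖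
      ≤ ‖(4 : ℝ) • ((A - B) * Aᵀ * A)‖ + ‖(4 : ℝ) • (B * (A - B)ᵀ * A)‖
        + ‖(4 : ℝ) • (B * Bᵀ * (A - B))‖ + ‖((-4 : ℝ)) • (S0 * (A - B))‖
        + ‖(2 * lam) • (A - B)‖ := by
          refine (norm_add_le _ _).trans ?_
          gcongr
          refine (norm_add_le _ _).trans ?_
          gcongr
          refine (norm_add_le _ _).trans ?_
          gcongr
          exact norm_add_le _ _
    _ = 4 * ‖(A - B) * Aᵀ * A‖ + 4 * ‖B * (A - B)ᵀ * A‖ + 4 * ‖B * Bᵀ * (A - B)‖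
        + 4 * ‖S0 * (A - B)‖ + (2 * lam) * ‖A - B‖ := by
          rw [e4, e4, e4, e4', el]
    _ ≤ 4 * (G ^ 2 * ‖A - B‖) + 4 * (G ^ 2 * ‖A - B‖) + 4 * (G ^ 2 * ‖A - B‖)
        + 4 * (‖S0‖ * ‖A - B‖) + (2 * lam) * ‖A - B‖ := by
          gcongr
    _ = (12 * G ^ 2 + 2 * lam + 4 * ‖S0‖) * ‖A - B‖ := by ring
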